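/- If W(1), W(2) are independent random variables each distributed as U^{1/β} with U uniform on (0,1), then for every x ≥ 0 the random variable φ(x, W(1), W(2)) has the same distribution as W(1+x), where W = U^{1/β}. In other words, φ is an update function for the Markov kernel K(x,·) = Law(W(1+x)). -/

import Mathlib

open MeasureTheory ProbabilityTheory

lemma vol_Ioo_inter_Iic (m : ℝ) :
    volume (Set.Ioo (0:ℝ) 1 ∩ Set.Iic m) = ENNReal.ofReal (min m 1) := by
  rcases le_or_gt m 0 with hm | hm
  · have he : Set.Ioo (0:ℝ) 1 ∩ Set.Iic m = ∅ := by
      ext u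
      simp only [Set.mem_inter_iff, Set.mem_Ioo, Set.mem_Iic, Set.mem_empty_iff_false,
        iff_false, not_and]
      rintro ⟨h1, _⟩ h2
      linarith
    rw [he, measure_empty, Eq.comm, ENNReal.ofReal_eq_zero]
    exact le_trans (min_le_left _ _) hm
  · rcases le_or_gt 1 m with hm1 | hm1
    · have he : Set.Ioo (0:ℝ) 1 ∩ Set.Iic m = Set.Ioo 0 1 := by
        rw [Set.inter_eq_left]
        intro u hu
        exact le_trans hu.2.le hm1
      rw [he, Real.volume_Ioo, min_eq_right hm1]
      norm_num
    · have he : Set.Ioo (0:ℝ) 1 ∩ Set.Iic m = Set.Ioc 0 m := by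
        ext u
        simp only [Set.mem_inter_iff, Set.mem_Ioo, Set.mem_Iic, Set.mem_Ioc]
        constructor
        · rintro ⟨⟨h1, _⟩, h3⟩; exact ⟨h1, h3⟩
        · rintro ⟨h1, h2⟩; exact ⟨⟨h1, lt_of_le_of_lt h2 hm1⟩, h2⟩
      rw [he, Real.volume_Ioc, min_eq_left hm1.le]
      norm_num

lemma cdf_map (β : ℝ) (hβ : 0 < β) (s : ℝ) :
    Measure.map (fun u : ℝ => u ^ (1/β)) (volume.restrict (Set.Ioo 0 1)) (Set.Iic s)
      = ENNReal.ofReal (min ((s ⊔ 0) ^ β) 1) := by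
  have hg : Measurable fun u : ℝ => u ^ (1/β) :=
    (Real.continuous_rpow_const (by positivity)).measurable
  rw [Measure.map_apply hg measurableSet_Iic,
    Measure.restrict_apply (hg measurableSet_Iic)]
  have hset : (fun u : ℝ => u ^ (1/β)) ⁻¹' Set.Iic s ∩ Set.Ioo 0 1
      = Set.Ioo (0:ℝ) 1 ∩ Set.Iic ((s ⊔ 0) ^ β) := by
    ext u
    simp only [Set.mem_inter_iff, Set.mem_preimage, Set.mem_Iic, Set.mem_Ioo, and_comm]
    refine and_congr_left fun hu => ?_
    rcases le_or_gt s 0 with hs | hs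
    · have hpos : 0 < u ^ (1/β) := Real.rpow_pos_of_pos hu.1 _
      rw [sup_eq_right.mpr hs, Real.zero_rpow hβ.ne']
      constructor
      · intro h; linarith
      · intro h; linarith [hu.1]
    · rw [sup_eq_left.mpr hs.le, one_div,
        Real.rpow_inv_le_iff_of_pos hu.1.le hs.le hβ]
  rw [hset, vol_Ioo_inter_Iic]

theorem multigamma_update {Ω : Type*} [MeasureSpace Ω]
    [IsProbabilityMeasure (ℙ : Measure Ω)]
    (β : ℝ) (hβ : 0 < β) (W1 W2 : Ω → ℝ) (h1 : Measurable W1) (h2 : Measurable W2)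
    (hd1 : Measure.map W1 ℙ
      = Measure.map (fun u : ℝ => u ^ (1/β)) (volume.restrict (Set.Ioo 0 1)))
    (hd2 : Measure.map W2 ℙ
      = Measure.map (fun u : ℝ => u ^ (1/β)) (volume.restrict (Set.Ioo 0 1)))
    (hindep : IndepFun W1 W2 ℙ) :
    ∀ x : ℝ, 0 ≤ x →
      Measure.map (fun ω => if W1 ω ≤ 1 / (1 + x) then W2 ω else W1 ω * (1 + x)) ℙ
        = Measure.map (fun ω => W1 ω * (1 + x)) ℙ := by
  intro x hx
  have hx1 : (0:ℝ) < 1 + x := by linarith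
  set c : ℝ := 1 / (1 + x) with hc
  have hc0 : 0 < c := by positivity
  have hc1 : c ≤ 1 := by rw [hc, div_le_one hx1]; linarith
  have hW1 : ∀ s : ℝ, ℙ {ω | W1 ω ≤ s} = ENNReal.ofReal (min ((s ⊔ 0) ^ β) 1) := by
    intro s
    have h := cdf_map β hβ s
    rw [← hd1, Measure.map_apply h1 measurableSet_Iic] at h
    exact h
  have hW2 : ∀ s : ℝ, ℙ {ω | W2 ω ≤ s} = ENNReal.ofReal (min ((s ⊔ 0) ^ β) 1) := by
    intro s
    have h := cdf_map β hβ s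
    rw [← hd2, Measure.map_apply h2 measurableSet_Iic] at h
    exact h
  have hA : MeasurableSet {ω | W1 ω ≤ c} := measurableSet_le h1 measurable_const
  have hphi : Measurable (fun ω => if W1 ω ≤ c then W2 ω else W1 ω * (1 + x)) :=
    Measurable.ite hA h2 (h1.mul_const _)
  have hmul : Measurable fun ω => W1 ω * (1 + x) := h1.mul_const _
  haveI : IsProbabilityMeasure (Measure.map (fun ω => if W1 ω ≤ c then W2 ω
      else W1 ω * (1 + x)) ℙ) := Measure.isProbabilityMeasure_map hphi.aemeasurable
  haveI : IsProbabilityMeasure (Measure.map (fun ω => W1 ω * (1 + x)) ℙ) :=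
    Measure.isProbabilityMeasure_map hmul.aemeasurable
  apply Measure.ext_of_Iic
  intro t
  rw [Measure.map_apply hphi measurableSet_Iic, Measure.map_apply hmul measurableSet_Iic]
  have key : ∀ ω, W1 ω * (1 + x) ≤ t ↔ W1 ω ≤ t * c := by
    intro ω
    rw [hc, mul_one_div, le_div_iff₀ hx1]
  have hrhs : (fun ω => W1 ω * (1 + x)) ⁻¹' Set.Iic t = {ω | W1 ω ≤ t * c} := by
    ext ω
    simp only [Set.mem_preimage, Set.mem_Iic, Set.mem_setOf_eq, key]
  have hsplit : (fun ω => if W1 ω ≤ c then W2 ω else W1 ω * (1 + x)) ⁻¹' Set.Iic t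
      = ({ω | W1 ω ≤ c} ∩ {ω | W2 ω ≤ t}) ∪ ({ω | W1 ω ≤ t * c} \ {ω | W1 ω ≤ c}) := by
    ext ω
    simp only [Set.mem_preimage, Set.mem_Iic, Set.mem_union, Set.mem_inter_iff,
      Set.mem_diff, Set.mem_setOf_eq]
    by_cases h : W1 ω ≤ c
    · simp [h]
    · simp [h, key ω]
  rw [hrhs, hsplit]
  have hAt : MeasurableSet {ω | W1 ω ≤ t * c} := measurableSet_le h1 measurable_const
  have hdisj : Disjoint ({ω | W1 ω ≤ c} ∩ {ω | W2 ω ≤ t})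
      ({ω | W1 ω ≤ t * c} \ {ω | W1 ω ≤ c}) :=
    Set.disjoint_left.mpr fun ω hm hm2 => hm2.2 hm.1
  rw [measure_union hdisj (hAt.diff hA)]
  have hAB : ℙ ({ω | W1 ω ≤ c} ∩ {ω | W2 ω ≤ t})
      = ℙ {ω | W1 ω ≤ c} * ℙ {ω | W2 ω ≤ t} :=
    hindep.measure_inter_preimage_eq_mul (Set.Iic c) (Set.Iic t)
      measurableSet_Iic measurableSet_Iic
  rw [hAB]
  rcases le_or_gt 1 t with ht | ht
  · -- t ≥ 1 : P(W2 ≤ t) = 1, and A ⊆ {W1 ≤ tc}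
    have hW2t : ℙ {ω | W2 ω ≤ t} = 1 := by
      rw [hW2 t, sup_eq_left.mpr (le_trans zero_le_one ht),
        min_eq_right (Real.one_le_rpow ht hβ.le), ENNReal.ofReal_one]
    have hsub : {ω | W1 ω ≤ c} ⊆ {ω | W1 ω ≤ t * c} := fun ω hω =>
      le_trans hω (le_mul_of_one_le_left hc0.le ht)
    have hiad := measure_inter_add_diff (μ := ℙ) {ω | W1 ω ≤ t * c} hA
    rw [Set.inter_eq_right.mpr hsub] at hiad
    rw [hW2t, mul_one]
    exact hiad
  · -- t < 1 : the second set is empty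
    have htc : t * c < c := mul_lt_of_lt_one_left hc0 ht
    have hemp : {ω | W1 ω ≤ t * c} \ {ω | W1 ω ≤ c} = ∅ := by
      rw [Set.diff_eq_empty]
      exact fun ω hω => le_trans hω htc.le
    rw [hemp, measure_empty, add_zero, hW1, hW1, hW2,
      sup_eq_left.mpr hc0.le, min_eq_left (Real.rpow_le_one hc0.le hc1 hβ.le)]
    rcases le_or_gt t 0 with ht0 | ht0
    · have htc0 : t * c ≤ 0 := mul_nonpos_of_nonpos_of_nonneg ht0 hc0.le
      rw [sup_eq_right.mpr ht0, sup_eq_right.mpr htc0, Real.zero_rpow hβ.ne']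
      simp
    · have htc0 : 0 < t * c := mul_pos ht0 hc0
      rw [sup_eq_left.mpr ht0.le, sup_eq_left.mpr htc0.le,
        min_eq_left (Real.rpow_le_one ht0.le ht.le hβ.le),
        min_eq_left (Real.rpow_le_one htc0.le (le_trans htc.le hc1) hβ.le),
        ← ENNReal.ofReal_mul (Real.rpow_nonneg hc0.le _),
        ← Real.mul_rpow hc0.le ht0.le, mul_comm c t]
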